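/- Consider the GPU-scenario objective E(B₁,…,B_K) = ξ·√(Σ_k B_k) / (max_k (t_k^G(B_k) + u_k) + D), where ξ > 0, u_k ≥ 0, D ≥ 0 are constants and each t_k^G is the piecewise function of Assumption 1 with threshold B_k^th < B^max. If B* = (B₁*,…,B_K*) maximizes E over [1, B^max]^K and B_{k₀}* < B_{k₀}^th for some k₀, then the point B' obtained by replacing B_{k₀}* with B_{k₀}^th satisfies E(B') > E(B*), a contradiction; hence every maximizer satisfies B_k* ≥ B_k^th for all k. -/
import Mathlib


open Set

/-- Lemma 2: in the GPU scenario, every maximizer of the learning efficiency over the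
batchsize box has every device's batchsize in the compute-bound region. -/
theorem gpu_optimal_batchsize_compute_bound (K : ℕ) (hK : 1 ≤ K)
    (ξ D Bmax : ℝ) (hξ : 0 < ξ) (hD : 0 ≤ D) (hBmax : 1 < Bmax)
    (tℓ c th u : Fin K → ℝ)
    (htℓ : ∀ k, 0 < tℓ k) (hc : ∀ k, 0 < c k)
    (hth : ∀ k, 1 ≤ th k) (hthmax : ∀ k, th k < Bmax)
    (hu : ∀ k, 0 ≤ u k)
    (tG : Fin K → ℝ → ℝ)
    (htG : ∀ k x, tG k x = if x ≤ th k then tℓ k else c k * (x - th k) + tℓ k)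
    (E : (Fin K → ℝ) → ℝ)
    (hEdef : ∀ B : Fin K → ℝ,
      E B = ξ * Real.sqrt (∑ k, B k) / ((⨆ k : Fin K, (tG k (B k) + u k)) + D))
    (Bstar : Fin K → ℝ) (hbox : ∀ k, Bstar k ∈ Icc (1 : ℝ) Bmax)
    (hmax : ∀ B : Fin K → ℝ, (∀ k, B k ∈ Icc (1 : ℝ) Bmax) → E B ≤ E Bstar) :
    ∀ k, th k ≤ Bstar k := by
  intro k0
  by_contra hlt
  push_neg at hlt
  haveI : Nonempty (Fin K) := ⟨⟨0, hK⟩⟩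
  set B' : Fin K → ℝ := Function.update Bstar k0 (th k0) with hB'
  have hbox' : ∀ k, B' k ∈ Icc (1 : ℝ) Bmax := by
    intro k
    by_cases hk : k = k0
    · subst hk
      simp [hB', Function.update_self]
      exact ⟨hth k, le_of_lt (hthmax k)⟩
    · simpa [hB', Function.update_of_ne hk] using hbox k
  -- denominators equal
  have hden : (⨆ k : Fin K, (tG k (B' k) + u k)) = ⨆ k : Fin K, (tG k (Bstar k) + u k) := by
    apply iSup_congr
    intro k
    by_cases hk : k = k0
    · subst hk
      have h1 : tG k (B' k) = tℓ k := by
        rw [hB', Function.update_self, htG]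
        simp
      have h2 : tG k (Bstar k) = tℓ k := by
        rw [htG]
        simp [le_of_lt hlt]
      rw [h1, h2]
    · rw [hB', Function.update_of_ne hk]
  -- denominator positive
  have hdenpos : 0 < (⨆ k : Fin K, (tG k (Bstar k) + u k)) + D := by
    have hle : tG k0 (Bstar k0) + u k0 ≤ ⨆ k : Fin K, (tG k (Bstar k) + u k) :=
      le_ciSup (Set.Finite.bddAbove (Set.finite_range (fun k => tG k (Bstar k) + u k))) k0
    have hpos : 0 < tG k0 (Bstar k0) + u k0 := by
      rw [htG]
      simp [le_of_lt hlt]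
      have := htℓ k0
      have := hu k0
      linarith
    linarith
  -- sums
  have hsum : ∑ k, Bstar k < ∑ k, B' k := by
    have h1 : ∑ k, B' k = th k0 + ∑ k ∈ Finset.univ.erase k0, Bstar k := by
      rw [hB', Finset.sum_update_of_mem (Finset.mem_univ k0)]
      congr 1
      rw [Finset.sdiff_singleton_eq_erase]
    have h2 : ∑ k, Bstar k = Bstar k0 + ∑ k ∈ Finset.univ.erase k0, Bstar k :=
      (Finset.add_sum_erase _ _ (Finset.mem_univ k0)).symm
    rw [h1, h2]
    linarith [(hbox k0).1]
  have hsumnn : 0 ≤ ∑ k, Bstar k :=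
    Finset.sum_nonneg fun k _ => le_trans zero_le_one (hbox k).1
  have hnum : ξ * Real.sqrt (∑ k, Bstar k) < ξ * Real.sqrt (∑ k, B' k) := by
    apply mul_lt_mul_of_pos_left _ hξ
    exact Real.sqrt_lt_sqrt hsumnn hsum
  have hEE : E Bstar < E B' := by
    rw [hEdef, hEdef, hden]
    exact div_lt_div_of_pos_right hnum hdenpos
  exact absurd (hmax B' hbox') (not_le.mpr hEE)
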